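/- Let X be a finite topological T₀-space and let φ : ℝ≥0 × X → X be a semiflow. If s, t ∈ ℝ≥0 satisfy s < t, then φ(t,x) ≤ φ(s,x) in the specialization order (i.e., φ(t,x) ⤳ φ(s,x)) for every x ∈ X. -/

import Mathlib

open NNReal Topology

/-- A semiflow on a topological space `X`: a jointly continuous map
`φ : ℝ≥0 × X → X` with `φ 0 x = x` and `φ s (φ t x) = φ (s + t) x`. -/
def IsSemiflow {X : Type*} [TopologicalSpace X] (φ : ℝ≥0 → X → X) : Prop :=
  Continuous (fun p : ℝ≥0 × X => φ p.1 p.2) ∧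
  (∀ x : X, φ 0 x = x) ∧
  ∀ (s t : ℝ≥0) (x : X), φ s (φ t x) = φ (s + t) x

/-- A semiflow is trivial if every time-`t` map is the identity. -/
def IsTrivialSemiflow {X : Type*} [TopologicalSpace X] (φ : ℝ≥0 → X → X) : Prop :=
  ∀ (t : ℝ≥0) (x : X), φ t x = x

/-- `x` is a down beat point: `U_x \ {x}` has a greatest element in the
specialization order (`y ⤳ x` means `y ≤ x`, i.e. `y ∈ U_x`). -/
def IsDownBeatPoint {X : Type*} [TopologicalSpace X] (x : X) : Prop :=
  ∃ m : X, (m ⤳ x ∧ m ≠ x) ∧ ∀ y : X, y ⤳ x → y ≠ x → y ⤳ m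

/-- `x` is an up beat point: `F_x \ {x}` has a least element in the
specialization order. -/
def IsUpBeatPoint {X : Type*} [TopologicalSpace X] (x : X) : Prop :=
  ∃ m : X, (x ⤳ m ∧ m ≠ x) ∧ ∀ y : X, x ⤳ y → y ≠ x → m ⤳ y

/-- For a semiflow on a finite `T₀`-space, later times are lower in the
specialization order: if `s < t` then `φ t x ⤳ φ s x` for every `x`. -/
theorem semiflow_antitone {X : Type*} [TopologicalSpace X] [Finite X] [T0Space X]
    (φ : ℝ≥0 → X → X) (hφ : IsSemiflow φ) (s t : ℝ≥0) (hst : s < t) :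
    ∀ x : X, φ t x ⤳ φ s x := by
  classical
  cases isEmpty_or_nonempty X with
  | inl h => exact fun x => (IsEmpty.false x).elim
  | inr hne =>
  haveI := Fintype.ofFinite X
  obtain ⟨hcont, h0, hadd⟩ := hφ
  -- pointwise small-time specialization
  have hpt : ∀ y : X, ∃ δ : ℝ≥0, 0 < δ ∧ ∀ ε : ℝ≥0, ε < δ → φ ε y ⤳ y := by
    intro y
    have hc : Continuous (fun ε : ℝ≥0 => φ ε y) :=
      hcont.comp (continuous_id.prodMk continuous_const)
    have hU : IsOpen (nhdsKer {y}) := isOpen_nhdsKer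
    have hmem : (fun ε : ℝ≥0 => φ ε y) ⁻¹' (nhdsKer {y}) ∈ 𝓝 (0 : ℝ≥0) := by
      apply (hU.preimage hc).mem_nhds
      simp [h0 y, subset_nhdsKer (Set.mem_singleton y)]
    obtain ⟨δ, hδpos, hδ⟩ := Metric.mem_nhds_iff.1 hmem
    refine ⟨⟨δ, hδpos.le⟩, by exact_mod_cast hδpos, fun ε hε => ?_⟩
    have : ε ∈ Metric.ball (0:ℝ≥0) δ := by
      simp only [Metric.mem_ball, NNReal.dist_eq, NNReal.coe_zero, sub_zero, abs_of_nonneg ε.coe_nonneg]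
      exact_mod_cast hε
    have := hδ this
    rw [Set.mem_preimage, mem_nhdsKer_iff_specializes] at this
    obtain ⟨z, hz, hzs⟩ := this
    rwa [Set.mem_singleton_iff.1 hz] at hzs
  choose δ hδpos hδ using hpt
  -- uniform δ
  set δ0 : ℝ≥0 := Finset.univ.inf' Finset.univ_nonempty δ with hδ0
  have hδ0pos : 0 < δ0 := by
    rw [hδ0]
    exact (Finset.lt_inf'_iff _).2 fun y _ => hδpos y
  have hδ0le : ∀ y, δ0 ≤ δ y := fun y =>
    Finset.inf'_le _ (Finset.mem_univ y)
  have hsmall : ∀ (ε : ℝ≥0), ε < δ0 → ∀ y, φ ε y ⤳ y := fun ε hε y =>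
    hδ y ε (hε.trans_le (hδ0le y))
  -- iterate
  have hiter : ∀ (n : ℕ) (ε : ℝ≥0), ε < δ0 → ∀ y, φ (n * ε) y ⤳ y := by
    intro n
    induction n with
    | zero => intro ε hε y; simp only [Nat.cast_zero, zero_mul, h0 y]; exact specializes_rfl
    | succ n ih =>
      intro ε hε y
      have : φ ((n + 1 : ℕ) * ε) y = φ ε (φ (n * ε) y) := by
        rw [hadd]; congr 1; push_cast; ring
      rw [this]
      exact (hsmall ε hε _).trans (ih ε hε y)
  -- all times
  have hall : ∀ (r : ℝ≥0) (y : X), φ r y ⤳ y := by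
    intro r y
    rcases eq_or_ne r 0 with rfl | hr
    · simp only [h0 y]; exact specializes_rfl
    · obtain ⟨n, hn⟩ := exists_nat_gt (r / δ0)
      have hn0 : (n : ℝ≥0) ≠ 0 := by
        rintro h
        rw [h] at hn
        exact (not_lt.2 zero_le) hn
      have hεlt : r / n < δ0 := by
        rw [div_lt_iff₀ (hn0.bot_lt)]
        calc r = (r / δ0) * δ0 := by rw [div_mul_cancel₀ _ hδ0pos.ne']
        _ < n * δ0 := by
            exact mul_lt_mul_of_pos_right hn hδ0pos
        _ = δ0 * n := mul_comm _ _
      have : (n : ℝ≥0) * (r / n) = r := mul_div_cancel₀ r hn0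
      calc φ r y = φ ((n : ℝ≥0) * (r / n)) y := by rw [this]
      _ = φ ((n : ℕ) * (r / n)) y := by norm_cast
      _ ⤳ y := hiter n (r / n) hεlt y
  intro x
  have key : φ t x = φ (t - s) (φ s x) := by
    rw [hadd, tsub_add_cancel_of_le hst.le]
  rw [key]
  exact hall (t - s) (φ s x)
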